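/- Let p ≡ 5 (mod 8) be a prime and let χ be a quartic Dirichlet character modulo p. If there exists a real number α such that ∑_{j=0}^{n} δ_χ(j)·δ_{χ̄}(n−j) = α·σ'_p(n) for all integers n ≥ 0, then p = 5 or p = 13. -/

import Mathlib

open Finset

/-- `δ_χ(n) = ∑_{0<d∣n} χ(d)` for `n ≥ 1`, and
`δ_χ(0) = −(1/(2N)) ∑_{a=1}^{N−1} χ(a)·a`. -/
noncomputable def deltaChar {N : ℕ} (χ : DirichletCharacter ℂ N) (n : ℕ) : ℂ :=
  if n = 0 then -(1 / (2 * (N : ℂ))) * ∑ a ∈ Finset.range N, χ a * a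
  else ∑ d ∈ n.divisors, χ d

/-- The complex-conjugate character `χ̄`. -/
noncomputable def conjChar {N : ℕ} (χ : DirichletCharacter ℂ N) : DirichletCharacter ℂ N :=
  χ.ringHomComp (starRingEnd ℂ)

/-- `σ'_p(n) = ∑_{0<d∣n, p∤d} d` for `n ≥ 1`, and `σ'_p(0) = (p−1)/24`. -/
noncomputable def sigma' (p : ℕ) (n : ℕ) : ℂ :=
  if n = 0 then ((p : ℂ) - 1) / 24
  else ∑ d ∈ n.divisors.filter (fun d => ¬ p ∣ d), (d : ℂ)


lemma keyNT (p : ℕ) (hp : p.Prime) (hp8 : p % 8 = 5) (A B : ℤ)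
    (h1 : 6*(A^2+B^2) + A*(p:ℤ)*((p:ℤ)-1) = 0) (h2 : B^2 = (2*A+(p:ℤ))^2) :
    p = 5 ∨ p = 13 := by
  have hp5 : 5 ≤ p := by omega
  set P : ℤ := (p : ℤ) with hP
  have hq : 30*A^2 + A*P*(P+23) + 6*P^2 = 0 := by linear_combination h1 - 6*h2
  have hm : (60*A + P*(P+23))^2 = P^2*((P+23)^2 - 720) := by linear_combination 120*hq
  have hpZ : Prime P := Nat.prime_iff_prime_int.mp hp
  have hpm : P ∣ (60*A + P*(P+23)) := by
    refine hpZ.dvd_of_dvd_pow (n := 2) ?_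
    rw [hm]; exact ⟨P*((P+23)^2-720), by ring⟩
  obtain ⟨t, ht⟩ := hpm
  have hP0 : (0:ℤ) < P := by rw [hP]; exact_mod_cast Nat.pos_of_ne_zero (by omega)
  have ht2 : t^2 = (P+23)^2 - 720 := by
    have h' : P^2 * t^2 = P^2 * ((P+23)^2 - 720) := by rw [← hm, ht]; ring
    exact mul_left_cancel₀ (by positivity) h'
  set s : ℕ := t.natAbs with hs
  have hsN : (s:ℤ)^2 + 720 = (P+23)^2 := by
    rw [hs, Int.natAbs_sq]; linarith [ht2]
  have hsN' : s^2 + 720 = (p+23)^2 := by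
    have := hsN; rw [hP] at this; exact_mod_cast this
  have hslt : s < p + 23 := by nlinarith [hsN']
  set u : ℕ := p + 23 - s with hu
  set v : ℕ := p + 23 + s with hv
  have huv : u * v = 720 := by
    have : ((p:ℤ) + 23 - s) * ((p:ℤ) + 23 + s) = 720 := by linear_combination -hsN
    have hcast : ((u:ℤ)) * (v:ℤ) = 720 := by
      rw [hu, hv]; push_cast [Nat.le_of_lt hslt]; linarith [this]
    exact_mod_cast hcast
  have hsum : u + v = 2*(p+23) := by omega
  have hv28 : 28 ≤ v := by omega
  have hu0 : u ≠ 0 := by rintro h0; rw [h0] at huv; simp at huv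
  have hu1 : 1 ≤ u := by omega
  have hu25 : u ≤ 25 := by nlinarith [huv]
  have hne69 : p ≠ 69 := by rintro rfl; norm_num at hp
  interval_cases u <;> omega


lemma sq_eq_neg_one_cases {x : ℂ} (hx : x^2 = -1) : x = Complex.I ∨ x = -Complex.I := by
  have h : (x - Complex.I) * (x + Complex.I) = 0 := by
    linear_combination hx - Complex.I_sq
  rcases mul_eq_zero.mp h with h | h
  · left; linear_combination h
  · right; linear_combination h

lemma quartic_cases {x : ℂ} (hx : x^4 = 1) : x = 1 ∨ x = -1 ∨ x = Complex.I ∨ x = -Complex.I := by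
  have h : (x - 1) * (x + 1) * (x - Complex.I) * (x + Complex.I) = 0 := by
    linear_combination hx + (1 - x^2) * Complex.I_sq
  rcases mul_eq_zero.mp h with h' | h'
  · rcases mul_eq_zero.mp h' with h'' | h''
    · rcases mul_eq_zero.mp h'' with h3 | h3
      · exact Or.inl (by linear_combination h3)
      · exact Or.inr (Or.inl (by linear_combination h3))
    · exact Or.inr (Or.inr (Or.inl (by linear_combination h'')))
  · exact Or.inr (Or.inr (Or.inr (by linear_combination h')))

lemma chi_two_sq (p : ℕ) (hp : p.Prime) (hp8 : p % 8 = 5)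
    (χ : DirichletCharacter ℂ p) (hχ : orderOf χ = 4) :
    (χ (2 : ZMod p))^2 = -1 := by
  haveI : Fact p.Prime := ⟨hp⟩
  have hp5 : 5 ≤ p := by omega
  have h2ne : ((2:ℕ) : ZMod p) ≠ 0 := by
    rw [Ne, ZMod.natCast_eq_zero_iff]
    intro hd; exact absurd (Nat.le_of_dvd (by norm_num) hd) (by omega)
  have h2unit : IsUnit (2 : ZMod p) := by
    have := isUnit_iff_ne_zero.mpr (by exact_mod_cast h2ne : (2 : ZMod p) ≠ 0)
    exact this
  obtain ⟨g, hg⟩ := IsCyclic.exists_generator (α := (ZMod p)ˣ)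
  -- χ g ^ 4 = 1
  have hχ4 : χ ^ 4 = 1 := by rw [← hχ]; exact pow_orderOf_eq_one χ
  have hg4 : χ (g : ZMod p) ^ 4 = 1 := by
    rw [← MulChar.pow_apply' χ (by norm_num) (g : ZMod p), hχ4]
    exact MulChar.one_apply_coe g
  have hg2 : χ (g : ZMod p) ^ 2 = -1 := by
    rcases quartic_cases hg4 with h1 | h1 | h1 | h1
    · exfalso
      -- χ g = 1 → χ = 1 → order 1 ≠ 4
      have : χ = 1 := by
        apply MulChar.ext
        intro a
        obtain ⟨n, hn⟩ : ∃ n : ℕ, g ^ n = a :=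
          (Submonoid.mem_powers_iff _ _).mp (mem_powers_iff_mem_zpowers.mpr (hg a))
        rw [← hn, MulChar.one_apply_coe]
        push_cast
        rw [map_pow, h1, one_pow]
      rw [this] at hχ; simp at hχ
    · exfalso
      have h2 : χ ^ 2 = 1 := by
        apply MulChar.ext
        intro a
        obtain ⟨n, hn⟩ : ∃ n : ℕ, g ^ n = a :=
          (Submonoid.mem_powers_iff _ _).mp (mem_powers_iff_mem_zpowers.mpr (hg a))
        rw [← hn, MulChar.one_apply_coe, MulChar.pow_apply' χ (by norm_num)]
        push_cast
        rw [map_pow, ← pow_mul, mul_comm n 2, pow_mul, h1]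
        norm_num
      have := orderOf_dvd_of_pow_eq_one h2
      rw [hχ] at this; norm_num at this
    · rw [h1]; exact Complex.I_sq
    · rw [h1]; simp [Complex.I_sq]
  -- 2 = g ^ n with n odd
  obtain ⟨n, hn⟩ : ∃ n : ℕ, g ^ n = h2unit.unit :=
    (Submonoid.mem_powers_iff _ _).mp (mem_powers_iff_mem_zpowers.mpr (hg _))
  have hnodd : Odd n := by
    rcases Nat.even_or_odd n with he | ho
    · exfalso
      obtain ⟨k, hk⟩ := he
      have hsq : IsSquare (2 : ZMod p) := by
        refine ⟨(g : ZMod p)^k, ?_⟩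
        have : ((g ^ n : (ZMod p)ˣ) : ZMod p) = (2 : ZMod p) := by rw [hn, IsUnit.unit_spec]
        rw [← this]; push_cast [hk]; ring
      rw [ZMod.exists_sq_eq_two_iff (by omega)] at hsq
      omega
    · exact ho
  have h2g : χ (2 : ZMod p) = χ (g : ZMod p) ^ n := by
    have : ((g ^ n : (ZMod p)ˣ) : ZMod p) = (2 : ZMod p) := by rw [hn, IsUnit.unit_spec]
    rw [← this]; push_cast; rw [map_pow]
  rw [h2g, ← pow_mul, mul_comm n 2, pow_mul, hg2]
  exact Odd.neg_one_pow hnodd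

lemma sum_gauss (p : ℕ) (χ : DirichletCharacter ℂ p) (hχ4 : χ ^ 4 = 1) :
    ∃ A B : ℤ, ∑ a ∈ Finset.range p, χ a * a = (A : ℂ) + (B : ℂ) * Complex.I := by
  have key : ∀ z ∈ Finset.range p, ∃ A B : ℤ, (χ z) * (z : ℂ) = (A:ℂ) + (B:ℂ) * Complex.I := by
    intro a _
    by_cases ha : IsUnit ((a : ℕ) : ZMod p)
    · have h4 : (χ a)^4 = 1 := by
        have h' := MulChar.pow_apply' χ (by norm_num : (4:ℕ) ≠ 0) ((a : ℕ) : ZMod p)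
        rw [hχ4] at h'
        rw [← h', ← ha.unit_spec, MulChar.one_apply_coe]
      rcases quartic_cases h4 with h | h | h | h
      · exact ⟨a, 0, by rw [h]; push_cast; ring⟩
      · exact ⟨-a, 0, by rw [h]; push_cast; ring⟩
      · exact ⟨0, a, by rw [h]; push_cast; ring⟩
      · exact ⟨0, -a, by rw [h]; push_cast; ring⟩
    · exact ⟨0, 0, by rw [MulChar.map_nonunit χ ha]; push_cast; ring⟩
  -- sum closure
  classical
  exact Finset.sum_induction (fun a : ℕ => χ a * (a:ℂ)) (fun z => ∃ A B : ℤ, z = (A:ℂ) + (B:ℂ)*Complex.I)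
    (by rintro x y ⟨a1,b1,h1⟩ ⟨a2,b2,h2⟩; exact ⟨a1+a2, b1+b2, by rw [h1,h2]; push_cast; ring⟩)
    ⟨0,0, by norm_num⟩ key

lemma delta_zero {N : ℕ} (χ : DirichletCharacter ℂ N) :
    deltaChar χ 0 = -(1 / (2 * (N : ℂ))) * ∑ a ∈ Finset.range N, χ a * a := by
  simp [deltaChar]

lemma delta_one {N : ℕ} (χ : DirichletCharacter ℂ N) : deltaChar χ 1 = 1 := by
  simp [deltaChar, Nat.divisors_one]

lemma delta_two {N : ℕ} (χ : DirichletCharacter ℂ N) :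
    deltaChar χ 2 = 1 + χ (2 : ZMod N) := by
  rw [deltaChar, if_neg (by norm_num), show (2:ℕ).divisors = {1,2} by decide,
    Finset.sum_insert (by decide)]
  norm_num

lemma sigma_zero (p : ℕ) : sigma' p 0 = ((p:ℂ) - 1)/24 := by simp [sigma']

lemma sigma_one (p : ℕ) (hp : 5 ≤ p) : sigma' p 1 = 1 := by
  rw [sigma', if_neg one_ne_zero, Nat.divisors_one]
  rw [Finset.filter_singleton, if_pos (by rw [Nat.dvd_one]; omega)]
  simp

lemma sigma_two (p : ℕ) (hp : 5 ≤ p) : sigma' p 2 = 3 := by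
  have h2 : ¬ p ∣ 2 := fun hd => absurd (Nat.le_of_dvd (by norm_num) hd) (by omega)
  have h1 : ¬ p ∣ 1 := by rw [Nat.dvd_one]; omega
  rw [sigma', if_neg (by norm_num), show (2:ℕ).divisors = {1,2} by decide]
  rw [Finset.filter_insert, if_pos h1, Finset.filter_singleton, if_pos h2,
    Finset.sum_insert (by decide)]
  norm_num

lemma conj_sum {p : ℕ} (χ : DirichletCharacter ℂ p) (A B : ℤ)
    (hS : ∑ a ∈ Finset.range p, χ a * a = (A:ℂ) + (B:ℂ) * Complex.I) :
    ∑ a ∈ Finset.range p, (conjChar χ) a * a = (A:ℂ) - (B:ℂ) * Complex.I := by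
  have h1 : ∑ a ∈ Finset.range p, (conjChar χ) a * (a:ℂ)
      = (starRingEnd ℂ) (∑ a ∈ Finset.range p, χ a * a) := by
    rw [map_sum]
    refine Finset.sum_congr rfl fun a _ => ?_
    rw [map_mul, Complex.conj_natCast]
    rfl
  rw [h1, hS]
  simp [map_add, map_mul, Complex.conj_I]
  ring

theorem farkas_quartic_only_if_first (p : ℕ) (hp : p.Prime) (hp8 : p % 8 = 5)
    (χ : DirichletCharacter ℂ p) (hχ : orderOf χ = 4)
    (h : ∃ α : ℝ, ∀ n : ℕ,
      ∑ j ∈ Finset.range (n + 1), deltaChar χ j * deltaChar (conjChar χ) (n - j)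
        = (α : ℂ) * sigma' p n) :
    p = 5 ∨ p = 13 := by
  have hp5 : 5 ≤ p := by omega
  have hp0 : ((p:ℂ)) ≠ 0 := Nat.cast_ne_zero.mpr (by omega)
  have hχ4 : χ ^ 4 = 1 := by rw [← hχ]; exact pow_orderOf_eq_one χ
  obtain ⟨A, B, hS⟩ := sum_gauss p χ hχ4
  have hSbar := conj_sum χ A B hS
  have hc2 := chi_two_sq p hp hp8 χ hχ
  obtain ⟨α, hh⟩ := h
  have e0 := hh 0
  have e1 := hh 1
  have e2 := hh 2
  simp only [Finset.sum_range_succ, Finset.sum_range_zero, zero_add,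
    Nat.sub_self, Nat.sub_zero, show (2:ℕ)-1 = 1 from rfl] at e0 e1 e2
  simp only [delta_zero, delta_one, delta_two, sigma_zero, sigma_one p hp5,
    sigma_two p hp5, hS, hSbar] at e0 e1 e2
  -- conj of χ 2
  have hconj2 : (conjChar χ) (2 : ZMod p) = (starRingEnd ℂ) (χ (2 : ZMod p)) := rfl
  rw [hconj2] at e2
  -- now derive the integer equations
  have hα : (α:ℂ) * p = -(A:ℂ) := by
    field_simp at e1
    linear_combination (-1/2 : ℂ) * e1
  have hAB : 6*((A:ℂ)^2+(B:ℂ)^2) + (A:ℂ)*(p:ℂ)*((p:ℂ)-1) = 0 := by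
    field_simp at e0
    linear_combination (1/4 : ℂ)*e0 + (p:ℂ)*((p:ℂ)-1)*hα + 6*(B:ℂ)^2*Complex.I_sq
  have hABZ : 6*(A^2+B^2) + A*(p:ℤ)*((p:ℤ)-1) = 0 := by exact_mod_cast hAB
  have hB2 : B^2 = (2*A+(p:ℤ))^2 := by
    rcases sq_eq_neg_one_cases hc2 with hcI | hcI
    · rw [hcI] at e2
      simp only [Complex.conj_I] at e2
      field_simp at e2
      have hBC : (B:ℂ) = 2*(A:ℂ)+(p:ℂ) := by
        linear_combination (-1/2 : ℂ)*e2 - 3*hα + (B:ℂ)*Complex.I_sq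
      have : B = 2*A+(p:ℤ) := by exact_mod_cast hBC
      rw [this]
    · rw [hcI] at e2
      simp only [map_neg, Complex.conj_I, neg_neg] at e2
      field_simp at e2
      have hBC : (B:ℂ) = -(2*(A:ℂ)+(p:ℂ)) := by
        linear_combination (1/2 : ℂ)*e2 + 3*hα + (B:ℂ)*Complex.I_sq
      have : B = -(2*A+(p:ℤ)) := by exact_mod_cast hBC
      rw [this]; ring
  exact keyNT p hp hp8 A B hABZ hB2
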